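/- The monic right and left orthogonal polynomials satisfy the Szegő (Verblunsky) recursions Φ_{n+1}^R(z) = z Φ_n^R(z) + Φ_n^{L,*}(z) Φ_{n+1}^R(0) and Φ_{n+1}^L(z) = z Φ_n^L(z) + Φ_{n+1}^L(0) Φ_n^{R,*}(z). -/
import Mathlib


noncomputable section

open ContinuousLinearMap

variable {H : Type*} [NormedAddCommGroup H] [InnerProductSpace ℂ H] [CompleteSpace H]

/-- A nontrivial positive operator-valued measure `μ` on the unit circle `𝕋`, recorded through
its moments `mom j = (1/2π) ∫ e^{-ijθ} dμ(θ)` (so `mom (-j) = (mom j)†`) and the associated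
right and left inner products `⟨⟨f, g⟩⟩_R = ∫ f(z)† dμ(z) g(z)` and
`⟨⟨f, g⟩⟩_L = ∫ g(z) dμ(z) f(z)†` on operator-valued functions on the circle, together with
their characteristic algebraic properties, positivity, and nontriviality
(`Trace ⟨⟨f, f⟩⟩_R > 0`, i.e. `⟨⟨f, f⟩⟩_R ≠ 0`, for every nonzero operator polynomial `f`). -/
structure OpMeasure (H : Type*) [NormedAddCommGroup H] [InnerProductSpace ℂ H]
    [CompleteSpace H] where
  mom : ℤ → H →L[ℂ] H
  Rip : (ℂ → H →L[ℂ] H) → (ℂ → H →L[ℂ] H) → (H →L[ℂ] H)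
  Lip : (ℂ → H →L[ℂ] H) → (ℂ → H →L[ℂ] H) → (H →L[ℂ] H)
  mom_neg : ∀ j : ℤ, mom (-j) = adjoint (mom j)
  Rip_mono : ∀ m k : ℕ,
    Rip (fun z => z ^ m • (1 : H →L[ℂ] H)) (fun z => z ^ k • (1 : H →L[ℂ] H)) =
      mom ((m : ℤ) - (k : ℤ))
  Lip_mono : ∀ m k : ℕ,
    Lip (fun z => z ^ m • (1 : H →L[ℂ] H)) (fun z => z ^ k • (1 : H →L[ℂ] H)) =
      mom ((m : ℤ) - (k : ℤ))
  Rip_add_left : ∀ f g h, Rip (f + g) h = Rip f h + Rip g h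
  Rip_add_right : ∀ f g h, Rip f (g + h) = Rip f g + Rip f h
  Lip_add_left : ∀ f g h, Lip (f + g) h = Lip f h + Lip g h
  Lip_add_right : ∀ f g h, Lip f (g + h) = Lip f g + Lip f h
  Rip_smul_left : ∀ (c : ℂ) (f g), Rip (fun z => c • f z) g = (starRingEnd ℂ) c • Rip f g
  Rip_smul_right : ∀ (c : ℂ) (f g), Rip f (fun z => c • g z) = c • Rip f g
  Lip_smul_left : ∀ (c : ℂ) (f g), Lip (fun z => c • f z) g = (starRingEnd ℂ) c • Lip f g
  Lip_smul_right : ∀ (c : ℂ) (f g), Lip f (fun z => c • g z) = c • Lip f g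
  Rip_op_left : ∀ (a : H →L[ℂ] H) (f g), Rip (fun z => f z * a) g = adjoint a * Rip f g
  Rip_op_right : ∀ (a : H →L[ℂ] H) (f g), Rip f (fun z => g z * a) = Rip f g * a
  Lip_op_left : ∀ (a : H →L[ℂ] H) (f g), Lip (fun z => a * f z) g = Lip f g * adjoint a
  Lip_op_right : ∀ (a : H →L[ℂ] H) (f g), Lip f (fun z => a * g z) = a * Lip f g
  Rip_adjoint : ∀ f g, adjoint (Rip f g) = Rip g f
  Lip_adjoint : ∀ f g, adjoint (Lip f g) = Lip g f
  Rip_pos : ∀ f, (Rip f f).IsPositive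
  Lip_pos : ∀ f, (Lip f f).IsPositive
  nontrivial_R : ∀ (n : ℕ) (f : ℂ → H →L[ℂ] H),
    (∃ a : Fin (n + 1) → H →L[ℂ] H, ∀ z, f z = ∑ k : Fin (n + 1), z ^ (k : ℕ) • a k) →
    f ≠ 0 → ∃ h : H, 0 < (@inner ℂ H _ (Rip f f h) h).re

/-- The right block Toeplitz matrix `T_n^R = [μ_{i-j}]_{i,j=0}^{n-1}` of the moments. -/
def TmatR (mom : ℤ → H →L[ℂ] H) (n : ℕ) : Matrix (Fin n) (Fin n) (H →L[ℂ] H) :=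
  fun i j => mom ((i : ℤ) - (j : ℤ))

/-- The left block Toeplitz matrix `T_n^L = [μ_{j-i}]_{i,j=0}^{n-1}` of the moments. -/
def TmatL (mom : ℤ → H →L[ℂ] H) (n : ℕ) : Matrix (Fin n) (Fin n) (H →L[ℂ] H) :=
  fun i j => mom ((j : ℤ) - (i : ℤ))

/-- The column `ν_n = (μ_{-n}, μ_{-n+1}, …, μ_{-1})ᵀ`. -/
def nuR (mom : ℤ → H →L[ℂ] H) (n : ℕ) : Fin n → H →L[ℂ] H :=
  fun k => mom ((k : ℤ) - (n : ℤ))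

/-- The column `ξ_n = (μ_n, μ_{n-1}, …, μ_1)ᵀ`. -/
def xiL (mom : ℤ → H →L[ℂ] H) (n : ℕ) : Fin n → H →L[ℂ] H :=
  fun k => mom ((n : ℤ) - (k : ℤ))

/-- Coefficients `(T_n^R)⁻¹ ν_n` of the monic right orthogonal polynomial. -/
def phiRcoef (mom : ℤ → H →L[ℂ] H) (n : ℕ) : Fin n → H →L[ℂ] H :=
  (Ring.inverse (TmatR mom n)).mulVec (nuR mom n)

/-- The monic right orthogonal polynomial
`Φ_n^R(z) = zⁿ I - [I, zI, …, z^{n-1}I] (T_n^R)⁻¹ ν_n`. -/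
def phiR (mom : ℤ → H →L[ℂ] H) (n : ℕ) : ℂ → H →L[ℂ] H :=
  fun z => z ^ n • (1 : H →L[ℂ] H) - ∑ k : Fin n, z ^ (k : ℕ) • phiRcoef mom n k

/-- Coefficients `[μ_{-n}, …, μ_{-1}] (T_n^L)⁻¹` of the monic left orthogonal polynomial. -/
def phiLcoef (mom : ℤ → H →L[ℂ] H) (n : ℕ) : Fin n → H →L[ℂ] H :=
  Matrix.vecMul (nuR mom n) (Ring.inverse (TmatL mom n))

/-- The monic left orthogonal polynomial
`Φ_n^L(z) = zⁿ I - [μ_{-n}, …, μ_{-1}] (T_n^L)⁻¹ (I, zI, …, z^{n-1}I)ᵀ`. -/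
def phiL (mom : ℤ → H →L[ℂ] H) (n : ℕ) : ℂ → H →L[ℂ] H :=
  fun z => z ^ n • (1 : H →L[ℂ] H) - ∑ k : Fin n, z ^ (k : ℕ) • phiLcoef mom n k

/-- The degree-`n` reversed polynomial `Φ_n^{R,*}(z) = zⁿ Φ_n^R(1/z̄)†`. -/
def phiRstar (mom : ℤ → H →L[ℂ] H) (n : ℕ) : ℂ → H →L[ℂ] H :=
  fun z => (1 : H →L[ℂ] H) - ∑ k : Fin n, z ^ (n - (k : ℕ)) • adjoint (phiRcoef mom n k)

/-- The degree-`n` reversed polynomial `Φ_n^{L,*}(z) = zⁿ Φ_n^L(1/z̄)†`. -/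
def phiLstar (mom : ℤ → H →L[ℂ] H) (n : ℕ) : ℂ → H →L[ℂ] H :=
  fun z => (1 : H →L[ℂ] H) - ∑ k : Fin n, z ^ (n - (k : ℕ)) • adjoint (phiLcoef mom n k)

/-- The Schur complement `κ_n^R = μ₀ - ν_n* (T_n^R)⁻¹ ν_n` of `μ₀` in `T_{n+1}^R`. -/
def kappaR (mom : ℤ → H →L[ℂ] H) (n : ℕ) : H →L[ℂ] H :=
  mom 0 - ∑ k : Fin n, adjoint (nuR mom n k) * phiRcoef mom n k

/-- The Schur complement `κ_n^L = μ₀ - ξ_n* (T_n^L)⁻¹ ξ_n` of `μ₀` in `T_{n+1}^L`. -/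
def kappaL (mom : ℤ → H →L[ℂ] H) (n : ℕ) : H →L[ℂ] H :=
  mom 0 - ∑ k : Fin n, adjoint (xiL mom n k) * ((Ring.inverse (TmatL mom n)).mulVec (xiL mom n) k)

/-- `IsSqrtSeq s κ` : for every `m`, `s m` is the (invertible) positive square root of `κ m`. -/
def IsSqrtSeq (s : ℕ → H →L[ℂ] H) (κ : ℕ → H →L[ℂ] H) : Prop :=
  ∀ m : ℕ, (s m).IsPositive ∧ s m * s m = κ m ∧ IsUnit (s m)

/-- The Verblunsky coefficient `α_n = α_n^R = -(κ_n^{-R/2})† Φ_{n+1}^R(0)† κ_n^{L/2}`,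
expressed through given positive square roots `sR m = κ_m^{R/2}`, `sL m = κ_m^{L/2}`. -/
def alphaV (mom : ℤ → H →L[ℂ] H) (sR sL : ℕ → H →L[ℂ] H) (j : ℕ) : H →L[ℂ] H :=
  -(adjoint (Ring.inverse (sR j)) * adjoint (phiR mom (j + 1) 0) * sL j)

/-- The operator on the Hilbert space `H ⊕ ⋯ ⊕ H` (`PiLp 2`) associated with a block
operator matrix. -/
def blockToOp {n : ℕ} (M : Matrix (Fin n) (Fin n) (H →L[ℂ] H)) :
    (PiLp 2 fun _ : Fin n => H) →L[ℂ] PiLp 2 fun _ : Fin n => H :=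
  ((PiLp.continuousLinearEquiv 2 ℂ fun _ : Fin n => H).symm.toContinuousLinearMap).comp
    ((ContinuousLinearMap.pi fun i =>
        ∑ j : Fin n, (M i j).comp (ContinuousLinearMap.proj j)).comp
      (PiLp.continuousLinearEquiv 2 ℂ fun _ : Fin n => H).toContinuousLinearMap)

/-- An operator `T` on a Hilbert space is *positive definite* if `⟨T x, x⟩ > 0` for every
`x ≠ 0` and `T` has a bounded inverse. -/
def IsPosDef {E : Type*} [NormedAddCommGroup E] [InnerProductSpace ℂ E]
    (T : E →L[ℂ] E) : Prop :=
  (∀ x : E, x ≠ 0 → 0 < (@inner ℂ E _ (T x) x).re) ∧ IsUnit T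

namespace SzegoAux

variable (m : ℤ → H →L[ℂ] H)

lemma star_mom (hm : ∀ j : ℤ, m (-j) = adjoint (m j)) (a : ℤ) : star (m a) = m (-a) := by
  rw [ContinuousLinearMap.star_eq_adjoint, hm]

lemma hRrow (n : ℕ) (h : IsUnit (TmatR m n)) (i : Fin n) :
    ∑ k : Fin n, m ((i : ℤ) - (k : ℤ)) * phiRcoef m n k = m ((i : ℤ) - (n : ℤ)) := by
  have h1 : (TmatR m n).mulVec (phiRcoef m n) = nuR m n := by
    unfold phiRcoef
    rw [Matrix.mulVec_mulVec, Ring.mul_inverse_cancel _ h, Matrix.one_mulVec]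
  have := congrFun h1 i
  simpa [TmatR, nuR, Matrix.mulVec, dotProduct] using this

lemma hLcol (n : ℕ) (h : IsUnit (TmatL m n)) (j : Fin n) :
    ∑ k : Fin n, phiLcoef m n k * m ((j : ℤ) - (k : ℤ)) = m ((j : ℤ) - (n : ℤ)) := by
  have h1 : Matrix.vecMul (phiLcoef m n) (TmatL m n) = nuR m n := by
    unfold phiLcoef
    rw [Matrix.vecMul_vecMul, Ring.inverse_mul_cancel _ h, Matrix.vecMul_one]
  have := congrFun h1 j
  simpa [TmatL, nuR, Matrix.vecMul, dotProduct] using this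

lemma hLstar (hm : ∀ j : ℤ, m (-j) = adjoint (m j)) (n : ℕ) (h : IsUnit (TmatL m n)) (j : Fin n) :
    ∑ k : Fin n, m ((k : ℤ) - (j : ℤ)) * star (phiLcoef m n k) = m ((n : ℤ) - (j : ℤ)) := by
  have := congrArg star (hLcol m n h j)
  simpa [star_sum, star_mul, star_mom m hm, neg_sub] using this

lemma hRstar (hm : ∀ j : ℤ, m (-j) = adjoint (m j)) (n : ℕ) (h : IsUnit (TmatR m n)) (i : Fin n) :
    ∑ k : Fin n, star (phiRcoef m n k) * m ((k : ℤ) - (i : ℤ)) = m ((n : ℤ) - (i : ℤ)) := by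
  have := congrArg star (hRrow m n h i)
  simpa [star_sum, star_mul, star_mom m hm, neg_sub] using this


lemma key_R (hm : ∀ j : ℤ, m (-j) = adjoint (m j)) (n : ℕ)
    (hTRn : IsUnit (TmatR m n)) (hTRn1 : IsUnit (TmatR m (n + 1)))
    (hTLn : IsUnit (TmatL m n)) (k : Fin n) :
    phiRcoef m (n + 1) k.succ
      = phiRcoef m n k - star (phiLcoef m n k.rev) * phiRcoef m (n + 1) 0 := by
  set α := phiRcoef m n with hα
  set β := phiRcoef m (n + 1) with hβ
  set γ := phiLcoef m n with hγ
  have hrow : (TmatR m n).mulVec (fun k : Fin n => β k.succ - α k + star (γ k.rev) * β 0) = 0 := by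
    funext i
    have hi := i.isLt
    simp only [Matrix.mulVec, dotProduct, TmatR, Pi.zero_apply]
    have e1 : ∀ k : Fin n, m ((i : ℤ) - (k : ℤ)) * (β k.succ - α k + star (γ k.rev) * β 0)
        = m ((i : ℤ) - (k : ℤ)) * β k.succ - m ((i : ℤ) - (k : ℤ)) * α k
          + m ((i : ℤ) - (k : ℤ)) * star (γ k.rev) * β 0 := by
      intro k; rw [mul_add, mul_sub, mul_assoc]
    rw [Finset.sum_congr rfl (fun k _ => e1 k), Finset.sum_add_distrib,
      Finset.sum_sub_distrib, ← Finset.sum_mul]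
    -- S1
    have S1 : ∑ k : Fin n, m ((i : ℤ) - (k : ℤ)) * β k.succ
        = m ((i : ℤ) - (n : ℤ)) - m ((i : ℤ) + 1) * β 0 := by
      have h1 := hRrow m (n + 1) hTRn1 i.succ
      rw [Fin.sum_univ_succ] at h1
      have h2 : ∀ k : Fin n, m (((i.succ : Fin (n+1)) : ℤ) - ((k.succ : Fin (n+1)) : ℤ)) * β k.succ
          = m ((i : ℤ) - (k : ℤ)) * β k.succ := by
        intro k; congr 2; simp [Fin.val_succ]
      rw [Finset.sum_congr rfl (fun k _ => h2 k)] at h1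
      have h3 : (((i.succ : Fin (n+1)) : ℤ) - (((0 : Fin (n+1))) : ℤ)) = (i : ℤ) + 1 := by
        simp [Fin.val_succ]
      have h4 : (((i.succ : Fin (n+1)) : ℤ) - ((n + 1 : ℕ) : ℤ)) = (i : ℤ) - (n : ℤ) := by
        simp [Fin.val_succ]
      rw [h3, h4] at h1
      linear_combination (norm := abel) h1
    -- S2
    have S2 := hRrow m n hTRn i
    -- S3
    have S3 : ∑ k : Fin n, m ((i : ℤ) - (k : ℤ)) * star (γ k.rev) = m ((i : ℤ) + 1) := by
      have hre : ∑ k : Fin n, m ((i : ℤ) - (k : ℤ)) * star (γ k.rev)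
          = ∑ k : Fin n, m ((i : ℤ) - ((k.rev : Fin n) : ℤ)) * star (γ k) := by
        refine Fintype.sum_bijective Fin.rev Fin.rev_bijective _ _ fun x => ?_
        rw [Fin.rev_rev]
      rw [hre]
      have h5 := hLstar m hm n hTLn i.rev
      have h6 : ∀ k : Fin n, m ((i : ℤ) - ((k.rev : Fin n) : ℤ)) * star (γ k)
          = m ((k : ℤ) - ((i.rev : Fin n) : ℤ)) * star (γ k) := by
        intro k
        have hk := k.isLt
        congr 2
        simp only [Fin.val_rev]
        omega
      rw [Finset.sum_congr rfl (fun k _ => h6 k), h5]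
      congr 1
      simp only [Fin.val_rev]
      omega
    rw [S1, S2, S3]
    abel
  have hδ0 : (fun k : Fin n => β k.succ - α k + star (γ k.rev) * β 0) = 0 := by
    have h2 := congrArg (fun v => (Ring.inverse (TmatR m n)).mulVec v) hrow
    simpa [Matrix.mulVec_mulVec, Ring.inverse_mul_cancel _ hTRn, Matrix.one_mulVec,
      Matrix.mulVec_zero] using h2
  have h3 := congrFun hδ0 k
  simp only [Pi.zero_apply] at h3
  have h4 : β k.succ - (α k - star (γ k.rev) * β 0) = 0 := by
    rw [← h3]; abel
  exact sub_eq_zero.mp h4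


lemma key_L (hm : ∀ j : ℤ, m (-j) = adjoint (m j)) (n : ℕ)
    (hTLn : IsUnit (TmatL m n)) (hTLn1 : IsUnit (TmatL m (n + 1)))
    (hTRn : IsUnit (TmatR m n)) (k : Fin n) :
    phiLcoef m (n + 1) k.succ
      = phiLcoef m n k - phiLcoef m (n + 1) 0 * star (phiRcoef m n k.rev) := by
  set α := phiRcoef m n with hα
  set γ := phiLcoef m n with hγ
  set γ' := phiLcoef m (n + 1) with hγ'
  have hcol : Matrix.vecMul (fun j : Fin n => γ' j.succ - γ j + γ' 0 * star (α j.rev))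
      (TmatL m n) = 0 := by
    funext i
    have hi := i.isLt
    simp only [Matrix.vecMul, dotProduct, TmatL, Pi.zero_apply]
    have e1 : ∀ k : Fin n, (γ' k.succ - γ k + γ' 0 * star (α k.rev)) * m ((i : ℤ) - (k : ℤ))
        = γ' k.succ * m ((i : ℤ) - (k : ℤ)) - γ k * m ((i : ℤ) - (k : ℤ))
          + γ' 0 * (star (α k.rev) * m ((i : ℤ) - (k : ℤ))) := by
      intro k; rw [add_mul, sub_mul, mul_assoc]
    rw [Finset.sum_congr rfl (fun k _ => e1 k), Finset.sum_add_distrib,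
      Finset.sum_sub_distrib, ← Finset.mul_sum]
    have S1 : ∑ k : Fin n, γ' k.succ * m ((i : ℤ) - (k : ℤ))
        = m ((i : ℤ) - (n : ℤ)) - γ' 0 * m ((i : ℤ) + 1) := by
      have h1 := hLcol m (n + 1) hTLn1 i.succ
      rw [Fin.sum_univ_succ] at h1
      have h2 : ∀ k : Fin n, γ' k.succ * m (((i.succ : Fin (n+1)) : ℤ) - ((k.succ : Fin (n+1)) : ℤ))
          = γ' k.succ * m ((i : ℤ) - (k : ℤ)) := by
        intro k; congr 2; simp [Fin.val_succ]
      rw [Finset.sum_congr rfl (fun k _ => h2 k)] at h1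
      have h3 : (((i.succ : Fin (n+1)) : ℤ) - (((0 : Fin (n+1))) : ℤ)) = (i : ℤ) + 1 := by
        simp [Fin.val_succ]
      have h4 : (((i.succ : Fin (n+1)) : ℤ) - ((n + 1 : ℕ) : ℤ)) = (i : ℤ) - (n : ℤ) := by
        simp [Fin.val_succ]
      rw [h3, h4] at h1
      linear_combination (norm := abel) h1
    have S2 := hLcol m n hTLn i
    have S3 : ∑ k : Fin n, star (α k.rev) * m ((i : ℤ) - (k : ℤ)) = m ((i : ℤ) + 1) := by
      have hre : ∑ k : Fin n, star (α k.rev) * m ((i : ℤ) - (k : ℤ))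
          = ∑ k : Fin n, star (α k) * m ((i : ℤ) - ((k.rev : Fin n) : ℤ)) := by
        refine Fintype.sum_bijective Fin.rev Fin.rev_bijective _ _ fun x => ?_
        rw [Fin.rev_rev]
      rw [hre]
      have h5 := hRstar m hm n hTRn i.rev
      have h6 : ∀ k : Fin n, star (α k) * m ((i : ℤ) - ((k.rev : Fin n) : ℤ))
          = star (α k) * m ((k : ℤ) - ((i.rev : Fin n) : ℤ)) := by
        intro k
        have hk := k.isLt
        congr 2
        simp only [Fin.val_rev]
        omega
      rw [Finset.sum_congr rfl (fun k _ => h6 k), h5]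
      congr 1
      simp only [Fin.val_rev]
      omega
    rw [S1, S2, S3]
    abel
  have hδ0 : (fun j : Fin n => γ' j.succ - γ j + γ' 0 * star (α j.rev)) = 0 := by
    have h2 := congrArg (fun v => Matrix.vecMul v (Ring.inverse (TmatL m n))) hcol
    simpa [Matrix.vecMul_vecMul, Ring.mul_inverse_cancel _ hTLn, Matrix.vecMul_one,
      Matrix.zero_vecMul] using h2
  have h3 := congrFun hδ0 k
  simp only [Pi.zero_apply] at h3
  have h4 : γ' k.succ - (γ k - γ' 0 * star (α k.rev)) = 0 := by
    rw [← h3]; abel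
  exact sub_eq_zero.mp h4

end SzegoAux

/-- **Szegő (Verblunsky) recursions.** The monic right and left orthogonal polynomials obey
`Φ_{n+1}^R(z) = z Φ_n^R(z) + Φ_n^{L,*}(z) Φ_{n+1}^R(0)` and
`Φ_{n+1}^L(z) = z Φ_n^L(z) + Φ_{n+1}^L(0) Φ_n^{R,*}(z)`. -/

theorem szego_verblunsky_recursion (μ : OpMeasure H) (n : ℕ)
    (hTR : ∀ m : ℕ, IsUnit (TmatR μ.mom m)) (hTL : ∀ m : ℕ, IsUnit (TmatL μ.mom m)) :
    (∀ z : ℂ, phiR μ.mom (n + 1) z =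
        z • phiR μ.mom n z + phiLstar μ.mom n z * phiR μ.mom (n + 1) 0) ∧
    (∀ z : ℂ, phiL μ.mom (n + 1) z =
        z • phiL μ.mom n z + phiL μ.mom (n + 1) 0 * phiRstar μ.mom n z) := by
  have hm := μ.mom_neg
  constructor
  · intro z
    have hkey := SzegoAux.key_R μ.mom hm n (hTR n) (hTR (n + 1)) (hTL n)
    have h0 : phiR μ.mom (n + 1) 0 = -(phiRcoef μ.mom (n + 1) 0) := by
      simp [phiR, Fin.sum_univ_succ]
    rw [h0]
    have hsum : ∑ k : Fin n, z ^ (((k.succ : Fin (n + 1))) : ℕ) • phiRcoef μ.mom (n + 1) k.succ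
        = ∑ k : Fin n, z ^ ((k : ℕ) + 1) •
            (phiRcoef μ.mom n k - adjoint (phiLcoef μ.mom n k.rev) * phiRcoef μ.mom (n + 1) 0) :=
      Finset.sum_congr rfl fun k _ => by
        rw [hkey k, Fin.val_succ, ContinuousLinearMap.star_eq_adjoint]
    have hre : ∑ k : Fin n, z ^ (n - (k : ℕ)) •
          (adjoint (phiLcoef μ.mom n k) * phiRcoef μ.mom (n + 1) 0)
        = ∑ k : Fin n, z ^ ((k : ℕ) + 1) •
            (adjoint (phiLcoef μ.mom n k.rev) * phiRcoef μ.mom (n + 1) 0) := by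
      refine Fintype.sum_bijective Fin.rev Fin.rev_bijective _ _ fun x => ?_
      rw [Fin.rev_rev]
      have hx := x.isLt
      have hexp : n - (x : ℕ) = (((x.rev : Fin n)) : ℕ) + 1 := by
        simp only [Fin.val_rev]; omega
      rw [hexp]
    have hz : z • (z ^ n • (1 : H →L[ℂ] H) - ∑ k : Fin n, z ^ (k : ℕ) • phiRcoef μ.mom n k)
        = z ^ (n + 1) • (1 : H →L[ℂ] H)
          - ∑ k : Fin n, z ^ ((k : ℕ) + 1) • phiRcoef μ.mom n k := by
      rw [smul_sub, smul_smul, ← pow_succ', Finset.smul_sum]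
      congr 1
      refine Finset.sum_congr rfl fun k _ => ?_
      rw [smul_smul, ← pow_succ']
    have hmul : (1 - ∑ k : Fin n, z ^ (n - (k : ℕ)) • adjoint (phiLcoef μ.mom n k)) *
          (-(phiRcoef μ.mom (n + 1) 0))
        = -(phiRcoef μ.mom (n + 1) 0) + ∑ k : Fin n, z ^ ((k : ℕ) + 1) •
            (adjoint (phiLcoef μ.mom n k.rev) * phiRcoef μ.mom (n + 1) 0) := by
      rw [sub_mul, one_mul, Finset.sum_mul, ← hre]
      simp only [smul_mul_assoc, mul_neg, smul_neg]
      rw [Finset.sum_neg_distrib]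
      abel
    simp only [phiR, phiLstar]
    rw [Fin.sum_univ_succ, hsum, hz, hmul]
    simp only [Fin.val_zero, pow_zero, one_smul, smul_sub]
    rw [Finset.sum_sub_distrib]
    abel
  · intro z
    have hkey := SzegoAux.key_L μ.mom hm n (hTL n) (hTL (n + 1)) (hTR n)
    have h0 : phiL μ.mom (n + 1) 0 = -(phiLcoef μ.mom (n + 1) 0) := by
      simp [phiL, Fin.sum_univ_succ]
    rw [h0]
    have hsum : ∑ k : Fin n, z ^ (((k.succ : Fin (n + 1))) : ℕ) • phiLcoef μ.mom (n + 1) k.succ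
        = ∑ k : Fin n, z ^ ((k : ℕ) + 1) •
            (phiLcoef μ.mom n k - phiLcoef μ.mom (n + 1) 0 * adjoint (phiRcoef μ.mom n k.rev)) :=
      Finset.sum_congr rfl fun k _ => by
        rw [hkey k, Fin.val_succ, ContinuousLinearMap.star_eq_adjoint]
    have hre : ∑ k : Fin n, z ^ (n - (k : ℕ)) •
          (phiLcoef μ.mom (n + 1) 0 * adjoint (phiRcoef μ.mom n k))
        = ∑ k : Fin n, z ^ ((k : ℕ) + 1) •
            (phiLcoef μ.mom (n + 1) 0 * adjoint (phiRcoef μ.mom n k.rev)) := by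
      refine Fintype.sum_bijective Fin.rev Fin.rev_bijective _ _ fun x => ?_
      rw [Fin.rev_rev]
      have hx := x.isLt
      have hexp : n - (x : ℕ) = (((x.rev : Fin n)) : ℕ) + 1 := by
        simp only [Fin.val_rev]; omega
      rw [hexp]
    have hz : z • (z ^ n • (1 : H →L[ℂ] H) - ∑ k : Fin n, z ^ (k : ℕ) • phiLcoef μ.mom n k)
        = z ^ (n + 1) • (1 : H →L[ℂ] H)
          - ∑ k : Fin n, z ^ ((k : ℕ) + 1) • phiLcoef μ.mom n k := by
      rw [smul_sub, smul_smul, ← pow_succ', Finset.smul_sum]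
      congr 1
      refine Finset.sum_congr rfl fun k _ => ?_
      rw [smul_smul, ← pow_succ']
    have hmul : (-(phiLcoef μ.mom (n + 1) 0)) *
          (1 - ∑ k : Fin n, z ^ (n - (k : ℕ)) • adjoint (phiRcoef μ.mom n k))
        = -(phiLcoef μ.mom (n + 1) 0) + ∑ k : Fin n, z ^ ((k : ℕ) + 1) •
            (phiLcoef μ.mom (n + 1) 0 * adjoint (phiRcoef μ.mom n k.rev)) := by
      rw [mul_sub, mul_one, Finset.mul_sum, ← hre]
      simp only [mul_smul_comm, neg_mul, smul_neg]
      rw [Finset.sum_neg_distrib]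
      abel
    simp only [phiL, phiRstar]
    rw [Fin.sum_univ_succ, hsum, hz, hmul]
    simp only [Fin.val_zero, pow_zero, one_smul, smul_sub]
    rw [Finset.sum_sub_distrib]
    abel
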